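/- Let (f,λ,ω) with f, λ real numbers and ω a vector in a 2-dimensional real inner product space, g_Σ the inner product tensor and vol_Σ the area form. If (f² - λ² - |ω|²)g_Σ - 2fλ·vol_Σ + ω⊗ω = 0 as a bilinear form, then ω = 0, f = 0, and λ = 0. -/
import Mathlib


open Matrix

/- STATEMENT 14: In a 2-dimensional oriented real inner product space (model ℝ², with
metric tensor g_Σ = δᵢⱼ and area form vol_Σ = ![![0,1],![-1,0]]), if
(f² - λ² - |ω|²)g_Σ - 2fλ·vol_Σ + ω⊗ω = 0 as a bilinear form, then ω = 0, f = 0, λ = 0. -/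
theorem stmt_14 (f l : ℝ) (ω : Fin 2 → ℝ)
    (h : ∀ i j : Fin 2,
      (f ^ 2 - l ^ 2 - ω ⬝ᵥ ω) * (if i = j then (1 : ℝ) else 0)
        - 2 * f * l * (![![0, 1], ![-1, 0]] i j) + ω i * ω j = 0) :
    ω = 0 ∧ f = 0 ∧ l = 0 := by
  have h00 := h 0 0
  have h11 := h 1 1
  have h01 := h 0 1
  have h10 := h 1 0
  simp [dotProduct, Fin.sum_univ_two] at h00 h11 h01 h10
  have e1 : ω 0 * ω 1 = 0 := by linarith
  have e2 : ω 0 * ω 0 = ω 1 * ω 1 := by linarith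
  have hω0 : ω 0 = 0 := by
    have h4 : ω 0 ^ 4 = ω 0 * ω 0 * (ω 1 * ω 1) := by rw [← e2]; ring
    have h5 : ω 0 * ω 0 * (ω 1 * ω 1) = (ω 0 * ω 1) * (ω 0 * ω 1) := by ring
    rw [h5, e1, mul_zero] at h4
    exact pow_eq_zero_iff (by norm_num) |>.mp h4
  have hω1 : ω 1 = 0 := by
    have := e2; rw [hω0, mul_zero] at this
    exact mul_self_eq_zero.mp this.symm
  have e3 : f * l = 0 := by nlinarith
  have e4 : f * f = l * l := by nlinarith
  have hf : f = 0 := by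
    have h4 : f ^ 4 = f * f * (l * l) := by rw [← e4]; ring
    have h5 : f * f * (l * l) = (f * l) * (f * l) := by ring
    rw [h5, e3, mul_zero] at h4
    exact pow_eq_zero_iff (by norm_num) |>.mp h4
  have hl : l = 0 := by
    have := e4; rw [hf, mul_zero] at this
    exact mul_self_eq_zero.mp this.symm
  refine ⟨funext fun i => ?_, hf, hl⟩
  fin_cases i <;> simpa using ‹_›
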